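/- arXiv:1805.05054 — 5 statements merged into one kernel-verified Lean document; each statement's English description precedes it below -/
import Mathlib

section
/- Let λ be a probability measure on a measurable space E and h : E → ℝ a measurable function with ∫ e^h dλ < ∞. Then log ∫ e^h dλ = sup over probability measures ρ on E of { ∫ h dρ − KL(ρ, λ) }, with the convention ∞ − ∞ = −∞. -/
open MeasureTheory Classical

/-- Kullback–Leibler divergence, `+∞` if `ρ` is not absolutely continuous w.r.t. `λ`
(or if the log-likelihood ratio is not integrable). -/

noncomputable def klDiv' {E : Type*} [MeasurableSpace E] (ρ lam : Measure E) : EReal :=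
  if ρ ≪ lam ∧ Integrable (llr ρ lam) ρ then ((∫ x, llr ρ lam x ∂ρ : ℝ) : EReal) else ⊤

/-- Gibbs' inequality: the KL divergence between probability measures is nonnegative. -/
lemma gibbs_nonneg {E : Type*} [MeasurableSpace E] (ρ ν : Measure E)
    [IsProbabilityMeasure ρ] [IsProbabilityMeasure ν]
    (hρν : ρ ≪ ν) (hint : Integrable (llr ρ ν) ρ) :
    0 ≤ ∫ x, llr ρ ν x ∂ρ := by
  have hexp : (fun x ↦ Real.exp (-llr ρ ν x)) =ᵐ[ρ] fun x ↦ (ν.rnDeriv ρ x).toReal :=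
    exp_neg_llr hρν
  have hexp_int : Integrable (fun x ↦ Real.exp (-llr ρ ν x)) ρ :=
    Measure.integrable_toReal_rnDeriv.congr hexp.symm
  have h1 : ∫ x, Real.exp (-llr ρ ν x) ∂ρ ≤ 1 := by
    rw [integral_congr_ae hexp]
    calc ∫ x, (ν.rnDeriv ρ x).toReal ∂ρ
        ≤ (ν Set.univ).toReal := by
          rw [← setIntegral_univ]
          exact Measure.setIntegral_toReal_rnDeriv_le (measure_ne_top ν _)
      _ = 1 := by simp
  have h2 : ∀ x, 1 - llr ρ ν x ≤ Real.exp (-llr ρ ν x) := fun x => by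
    linarith [Real.add_one_le_exp (-llr ρ ν x)]
  have h3 : ∫ x, (1 - llr ρ ν x) ∂ρ ≤ ∫ x, Real.exp (-llr ρ ν x) ∂ρ :=
    integral_mono ((integrable_const 1).sub hint) hexp_int h2
  rw [integral_sub (integrable_const 1) hint] at h3
  simp only [integral_const, measure_univ, probReal_univ, ENNReal.toReal_one, smul_eq_mul, one_mul] at h3
  linarith

/-- Donsker–Varadhan variational formula:
`log ∫ e^h dλ = sup_ρ { ∫ h dρ − KL(ρ,λ) }` over probability measures `ρ`,
with the convention `∞ − ∞ = −∞`. -/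
theorem donsker_varadhan {E : Type*} [MeasurableSpace E]
    (lam : Measure E) [IsProbabilityMeasure lam]
    (h : E → ℝ) (hmeas : Measurable h)
    (hint : Integrable (fun x => Real.exp (h x)) lam) :
    (Real.log (∫ x, Real.exp (h x) ∂lam) : EReal)
      = ⨆ (ρ : Measure E) (_ : IsProbabilityMeasure ρ) (_ : Integrable h ρ),
          (((∫ x, h x ∂ρ : ℝ) : EReal) - klDiv' ρ lam) := by
  set Z : ℝ := ∫ x, Real.exp (h x) ∂lam with hZ
  have hZpos : 0 < Z := integral_exp_pos hint
  -- upper bound: each term is at most log Z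
  have key1 : ∀ (ρ : Measure E), IsProbabilityMeasure ρ → Integrable h ρ →
      (((∫ x, h x ∂ρ : ℝ) : EReal) - klDiv' ρ lam) ≤ (Real.log Z : EReal) := by
    intro ρ hP hh
    by_cases hc : ρ ≪ lam ∧ Integrable (llr ρ lam) ρ
    · rw [klDiv', if_pos hc, ← EReal.coe_sub, EReal.coe_le_coe_iff]
      set ν := lam.tilted h with hν
      haveI : IsProbabilityMeasure ν := isProbabilityMeasure_tilted hint
      have hρν : ρ ≪ ν := hc.1.trans (absolutelyContinuous_tilted hint)
      have hint' : Integrable (llr ρ ν) ρ :=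
        integrable_llr_tilted_right hc.1 hh hc.2 hint
      have hgib := gibbs_nonneg ρ ν hρν hint'
      rw [hν, integral_llr_tilted_right hc.1 hh hint hc.2] at hgib
      linarith
    · rw [klDiv', if_neg hc, EReal.sub_top]
      exact bot_le
  -- truncation sets
  set A : ℕ → Set E := fun n => {x | h x ≤ n} with hA
  have hAm : ∀ n, MeasurableSet (A n) := fun n => measurableSet_le hmeas measurable_const
  have hAmono : Monotone A := fun m n hmn x hx => by
    simp only [hA, Set.mem_setOf_eq] at hx ⊢
    exact le_trans hx (by exact_mod_cast hmn)
  have hAunion : ⋃ n, A n = Set.univ := by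
    ext x
    simp only [Set.mem_iUnion, Set.mem_univ, iff_true]
    obtain ⟨n, hn⟩ := exists_nat_ge (h x)
    exact ⟨n, hn⟩
  set Zn : ℕ → ℝ := fun n => ∫ x in A n, Real.exp (h x) ∂lam with hZn
  have htend : Filter.Tendsto Zn Filter.atTop (nhds Z) := by
    have := tendsto_setIntegral_of_monotone hAm hAmono
      (by rw [hAunion]; exact hint.integrableOn)
    rwa [hAunion, setIntegral_univ] at this
  -- each truncated term is achieved in the supremum
  have key2 : ∀ n : ℕ, 0 < Zn n →
      ((Real.log (Zn n) : ℝ) : EReal)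
        ≤ ⨆ (ρ : Measure E) (_ : IsProbabilityMeasure ρ) (_ : Integrable h ρ),
            (((∫ x, h x ∂ρ : ℝ) : EReal) - klDiv' ρ lam) := by
    intro n hZnpos
    set μn : Measure E := lam.restrict (A n) with hμn
    have hexp_μn : Integrable (fun x => Real.exp (h x)) μn := hint.restrict
    have hZn_eq : ∫ x, Real.exp (h x) ∂μn = Zn n := rfl
    haveI : NeZero μn := by
      refine ⟨fun h0 => ?_⟩
      rw [hZn_eq.symm, h0, integral_zero_measure] at hZnpos
      exact lt_irrefl 0 hZnpos
    set ρn : Measure E := μn.tilted h with hρn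
    haveI hPn : IsProbabilityMeasure ρn := isProbabilityMeasure_tilted hexp_μn
    have hρμ : ρn ≪ μn := tilted_absolutelyContinuous _ _
    have hμlam : μn ≪ lam := Measure.restrict_le_self.absolutelyContinuous
    have hρlam : ρn ≪ lam := hρμ.trans hμlam
    -- a.e. membership in A n
    have hAe : ∀ᵐ x ∂ρn, x ∈ A n := hρμ.ae_le (ae_restrict_mem (hAm n))
    -- integrability of h w.r.t. ρn
    have hh_int : Integrable h ρn := by
      refine ⟨hmeas.aestronglyMeasurable, ?_⟩
      show (∫⁻ x, (‖h x‖₊ : ENNReal) ∂ρn) < ⊤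
      rw [hρn, lintegral_tilted]
      have hbound : ∀ᵐ x ∂μn, ENNReal.ofReal (Real.exp (h x) / ∫ x, Real.exp (h x) ∂μn)
          * (‖h x‖₊ : ENNReal) ≤ ENNReal.ofReal ((max ((n : ℝ) * Real.exp n) 1) / Zn n) := by
        filter_upwards [ae_restrict_mem (hAm n)] with x hxA
        have hx : h x ≤ n := hxA
        rw [hZn_eq, ← enorm_eq_nnnorm, ← ofReal_norm, ← ENNReal.ofReal_mul (by positivity),
          Real.norm_eq_abs]
        refine ENNReal.ofReal_le_ofReal ?_
        rw [div_mul_eq_mul_div, div_le_div_iff_of_pos_right hZnpos]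
        rcases le_or_gt 0 (h x) with hx0 | hx0
        · calc Real.exp (h x) * |h x| = |h x| * Real.exp (h x) := mul_comm _ _
            _ ≤ (n : ℝ) * Real.exp n := by
                rw [abs_of_nonneg hx0]
                exact mul_le_mul hx (Real.exp_le_exp.mpr hx) (Real.exp_pos _).le
                  (by exact_mod_cast Nat.zero_le n)
            _ ≤ max ((n : ℝ) * Real.exp n) 1 := le_max_left _ _
        · calc Real.exp (h x) * |h x| = -h x * Real.exp (-(-h x)) := by
                rw [abs_of_neg hx0]; ring_nf
            _ ≤ 1 := by
                have := Real.add_one_le_exp (-h x)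
                have h1 : -h x ≤ Real.exp (-h x) := by linarith
                rw [neg_neg]
                calc -h x * Real.exp (h x) ≤ Real.exp (-h x) * Real.exp (h x) :=
                      mul_le_mul_of_nonneg_right h1 (Real.exp_pos _).le
                  _ = 1 := by rw [← Real.exp_add]; simp
            _ ≤ max ((n : ℝ) * Real.exp n) 1 := le_max_right _ _
      calc ∫⁻ x, ENNReal.ofReal (Real.exp (h x) / ∫ x, Real.exp (h x) ∂μn)
              * (‖h x‖₊ : ENNReal) ∂μn
          ≤ ∫⁻ _, ENNReal.ofReal ((max ((n : ℝ) * Real.exp n) 1) / Zn n) ∂μn :=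
            lintegral_mono_ae hbound
        _ < ⊤ := by
            rw [lintegral_const]
            exact ENNReal.mul_lt_top ENNReal.ofReal_lt_top (measure_lt_top μn _)
    -- the log-likelihood ratio of ρn w.r.t. lam
    have hllr_ae : llr ρn lam =ᵐ[ρn] fun x => h x - Real.log (Zn n) := by
      have h1 : llr ρn lam =ᵐ[μn]
          fun x => h x - Real.log (∫ x, Real.exp (h x) ∂μn) + llr μn lam x :=
        llr_tilted_left hμlam hexp_μn hmeas.aemeasurable
      have h2 : llr μn lam =ᵐ[ρn] fun _ => 0 := by
        have h3 : (μn.rnDeriv lam) =ᵐ[lam] (A n).indicator 1 :=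
          Measure.rnDeriv_restrict_self lam (hAm n)
        filter_upwards [hρlam.ae_le h3, hAe] with x hx hxA
        rw [llr, hx, Set.indicator_of_mem hxA]
        simp
      filter_upwards [hρμ.ae_le h1, h2] with x hx1 hx2
      rw [hx1, hx2, hZn_eq, add_zero]
    have hllr_int : Integrable (llr ρn lam) ρn :=
      (hh_int.sub (integrable_const _)).congr hllr_ae.symm
    have hKL : klDiv' ρn lam = ((∫ x, h x ∂ρn - Real.log (Zn n) : ℝ) : EReal) := by
      rw [klDiv', if_pos ⟨hρlam, hllr_int⟩]
      congr 1
      rw [integral_congr_ae hllr_ae, integral_sub hh_int (integrable_const _), integral_const]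
      simp
    have hterm : (((∫ x, h x ∂ρn : ℝ) : EReal) - klDiv' ρn lam)
        = ((Real.log (Zn n) : ℝ) : EReal) := by
      rw [hKL, ← EReal.coe_sub]
      norm_num
    calc ((Real.log (Zn n) : ℝ) : EReal)
        = (((∫ x, h x ∂ρn : ℝ) : EReal) - klDiv' ρn lam) := hterm.symm
      _ ≤ _ := by
          refine le_iSup_of_le ρn ?_
          refine le_iSup_of_le hPn ?_
          exact le_iSup_of_le hh_int le_rfl
  refine le_antisymm ?_ ?_
  · -- log Z ≤ sup, by taking limits along the truncation
    have hlog : Filter.Tendsto (fun n => ((Real.log (Zn n) : ℝ) : EReal)) Filter.atTop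
        (nhds ((Real.log Z : ℝ) : EReal)) := by
      refine (continuous_coe_real_ereal.tendsto _).comp ?_
      exact ((Real.continuousAt_log hZpos.ne').tendsto).comp htend
    refine le_of_tendsto hlog ?_
    filter_upwards [htend.eventually (eventually_gt_nhds hZpos)] with n hn
    exact key2 n hn
  · exact iSup_le fun ρ => iSup_le fun hP => iSup_le fun hI => key1 ρ hP hI
end

section
/- Let λ be a probability measure on a measurable space E and h : E → ℝ a measurable function with ∫ e^h dλ < ∞ and h bounded above on the support of λ. Then the supremum in the Donsker–Varadhan formula sup_ρ { ∫ h dρ − KL(ρ, λ) } is attained by the Gibbs measure λ_h defined by dλ_h/dλ = e^h / ∫ e^h dλ. -/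
open MeasureTheory Classical

lemma integral_llr_nonneg' {α : Type*} [MeasurableSpace α] (μ ν : Measure α)
    [IsProbabilityMeasure μ] [IsProbabilityMeasure ν] (hμν : μ ≪ ν)
    (h_int : Integrable (llr μ ν) μ) : 0 ≤ ∫ x, llr μ ν x ∂μ := by
  set G : α → ENNReal := fun x => (μ.rnDeriv ν x)⁻¹ with hG
  have hGmeas : Measurable G := (Measure.measurable_rnDeriv μ ν).inv
  have hlint : ∫⁻ x, G x ∂μ ≤ 1 := by
    conv_lhs => rw [← Measure.withDensity_rnDeriv_eq μ ν hμν]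
    rw [lintegral_withDensity_eq_lintegral_mul ν (Measure.measurable_rnDeriv μ ν) hGmeas]
    calc ∫⁻ x, (μ.rnDeriv ν * G) x ∂ν ≤ ∫⁻ _, 1 ∂ν := by
          refine lintegral_mono fun x => ?_
          simp only [Pi.mul_apply, hG]
          rcases eq_or_ne (μ.rnDeriv ν x) 0 with h0 | h0
          · simp [h0]
          rcases eq_or_ne (μ.rnDeriv ν x) ⊤ with ht | ht
          · simp [ht]
          · rw [ENNReal.mul_inv_cancel h0 ht]
      _ = 1 := by simp
  have hGlt : ∀ᵐ x ∂μ, G x < ⊤ := by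
    filter_upwards [Measure.rnDeriv_pos hμν] with x hx
    simp [hG, ENNReal.inv_lt_top, hx]
  have hg_int : Integrable (fun x => (G x).toReal) μ :=
    integrable_toReal_of_lintegral_ne_top hGmeas.aemeasurable
      (lt_of_le_of_lt hlint (by norm_num)).ne
  have hg_le : ∫ x, (G x).toReal ∂μ ≤ 1 := by
    rw [integral_toReal hGmeas.aemeasurable hGlt]
    calc (∫⁻ x, G x ∂μ).toReal ≤ (1 : ENNReal).toReal :=
          ENNReal.toReal_mono (by norm_num) hlint
      _ = 1 := by simp
  have h_ae : ∀ᵐ x ∂μ, 1 - (G x).toReal ≤ llr μ ν x := by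
    filter_upwards [Measure.rnDeriv_pos hμν, hμν.ae_le (Measure.rnDeriv_lt_top μ ν)]
      with x hpos hlt
    have ht : 0 < (μ.rnDeriv ν x).toReal := ENNReal.toReal_pos hpos.ne' hlt.ne
    have h1 : Real.log ((μ.rnDeriv ν x).toReal)⁻¹ ≤ ((μ.rnDeriv ν x).toReal)⁻¹ - 1 :=
      Real.log_le_sub_one_of_pos (inv_pos.2 ht)
    rw [Real.log_inv] at h1
    have hGx : (G x).toReal = ((μ.rnDeriv ν x).toReal)⁻¹ := by
      simp [hG, ENNReal.toReal_inv]
    rw [llr, hGx]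
    linarith
  have := integral_mono_ae ((integrable_const (1:ℝ)).sub hg_int) h_int h_ae
  simp only [Pi.sub_apply] at this
  rw [integral_sub (integrable_const _) hg_int] at this
  simp only [integral_const, measure_univ, probReal_univ, ENNReal.toReal_one, smul_eq_mul, one_mul] at this
  linarith

/-- If `h` is bounded above on the support of `λ`, the supremum in the Donsker–Varadhan
formula is attained by the Gibbs measure `λ_h` with density `e^h / ∫ e^h dλ` w.r.t. `λ`. -/
theorem donsker_varadhan_attained {E : Type*} [MeasurableSpace E]
    (lam : Measure E) [IsProbabilityMeasure lam]
    (h : E → ℝ) (hmeas : Measurable h)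
    (hint : Integrable (fun x => Real.exp (h x)) lam)
    (hbdd : ∃ M : ℝ, ∀ᵐ x ∂lam, h x ≤ M) :
    let lamh : Measure E :=
      lam.withDensity (fun x => ENNReal.ofReal (Real.exp (h x) / ∫ y, Real.exp (h y) ∂lam))
    (((∫ x, h x ∂lamh : ℝ) : EReal) - klDiv' lamh lam)
      = ⨆ (ρ : Measure E) (_ : IsProbabilityMeasure ρ) (_ : Integrable h ρ),
          (((∫ x, h x ∂ρ : ℝ) : EReal) - klDiv' ρ lam) := by
  intro lamh
  have hlamh_eq : lamh = lam.tilted h := rfl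
  set Z : ℝ := ∫ y, Real.exp (h y) ∂lam with hZ
  have hZpos : 0 < Z := integral_exp_pos hint
  haveI hPt : IsProbabilityMeasure (lam.tilted h) := isProbabilityMeasure_tilted hint
  haveI hP : IsProbabilityMeasure lamh := by rw [hlamh_eq]; infer_instance
  have hach : lamh ≪ lam := hlamh_eq ▸ tilted_absolutelyContinuous lam h
  obtain ⟨M, hM⟩ := hbdd
  -- Integrability of h w.r.t. lamh
  have hint_h : Integrable h lamh := by
    have hd_meas : Measurable fun x => ENNReal.ofReal (Real.exp (h x) / Z) :=
      ((hmeas.exp).div_const Z).ennreal_ofReal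
    rw [show lamh = lam.withDensity (fun x => ENNReal.ofReal (Real.exp (h x) / Z)) from rfl,
      integrable_withDensity_iff hd_meas (Filter.Eventually.of_forall fun x => ENNReal.ofReal_lt_top)]
    have heq : ∀ x, h x * (ENNReal.ofReal (Real.exp (h x) / Z)).toReal
        = h x * (Real.exp (h x) / Z) := by
      intro x
      rw [ENNReal.toReal_ofReal (by positivity)]
    refine (integrable_congr (Filter.Eventually.of_forall heq)).mpr ?_
    refine Integrable.mono' (integrable_const ((Real.exp (-1) + |M| * Real.exp M)/Z)) ?_ ?_
    · exact (hmeas.mul ((hmeas.exp).div_const Z)).aestronglyMeasurable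
    · filter_upwards [hM] with x hx
      have hb : |h x| * Real.exp (h x) ≤ Real.exp (-1) + |M| * Real.exp M := by
        rcases le_or_gt (h x) 0 with h0 | h0
        · have h1 : (-h x) ≤ Real.exp (-h x - 1) := by
            have := Real.add_one_le_exp (-h x - 1); linarith
          have h2 : (-h x) * Real.exp (h x) ≤ Real.exp (-h x - 1) * Real.exp (h x) :=
            mul_le_mul_of_nonneg_right h1 (Real.exp_pos _).le
          rw [← Real.exp_add] at h2
          have h3 : -h x - 1 + h x = -1 := by ring
          rw [h3] at h2
          rw [abs_of_nonpos h0]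
          have : 0 ≤ |M| * Real.exp M := by positivity
          linarith
        · have h1 : |h x| * Real.exp (h x) ≤ |M| * Real.exp M := by
            refine mul_le_mul (le_trans ?_ (le_abs_self M)) (Real.exp_le_exp.2 hx)
              (Real.exp_pos _).le (abs_nonneg _)
            rw [abs_of_pos h0]; exact hx
          have : 0 < Real.exp (-1) := Real.exp_pos _
          linarith
      rw [Real.norm_eq_abs, abs_mul, abs_of_nonneg (by positivity : (0:ℝ) ≤ Real.exp (h x) / Z),
        ← mul_div_assoc]
      exact div_le_div_of_nonneg_right hb hZpos.le
  -- llr identity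
  have hllr0 : llr lam lam =ᵐ[lam] 0 := by
    filter_upwards [Measure.rnDeriv_self lam] with x hx
    simp [llr, hx]
  have hllr_eq : llr lamh lam =ᵐ[lam] fun x => h x - Real.log Z := by
    rw [hlamh_eq]
    filter_upwards [llr_tilted_left Measure.AbsolutelyContinuous.rfl hint hmeas.aemeasurable,
      hllr0] with x h1 h2
    rw [h1]
    simp only [Pi.zero_apply] at h2
    rw [h2, ← hZ]
    ring
  have hllr_eq' : llr lamh lam =ᵐ[lamh] fun x => h x - Real.log Z := hach.ae_le hllr_eq
  have hllr_int : Integrable (llr lamh lam) lamh :=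
    (integrable_congr hllr_eq').mpr (hint_h.sub (integrable_const _))
  have hllr_val : ∫ x, llr lamh lam x ∂lamh = ∫ x, h x ∂lamh - Real.log Z := by
    rw [integral_congr_ae hllr_eq', integral_sub hint_h (integrable_const _)]
    simp
  have hkl : klDiv' lamh lam = ((∫ x, h x ∂lamh - Real.log Z : ℝ) : EReal) := by
    rw [klDiv', if_pos ⟨hach, hllr_int⟩, hllr_val]
  have key : (((∫ x, h x ∂lamh : ℝ) : EReal) - klDiv' lamh lam) = ((Real.log Z : ℝ) : EReal) := by
    rw [hkl, ← EReal.coe_sub]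
    norm_num
  rw [key]
  apply le_antisymm
  · refine le_iSup_of_le lamh ?_
    rw [iSup_pos hP, iSup_pos hint_h]
    exact le_of_eq key.symm
  · refine iSup_le fun ρ => iSup_le fun hρ => iSup_le fun hhρ => ?_
    haveI := hρ
    by_cases hc : ρ ≪ lam ∧ Integrable (llr ρ lam) ρ
    · obtain ⟨hrl, hillr⟩ := hc
      have hrth : ρ ≪ lam.tilted h := hrl.trans (absolutelyContinuous_tilted hint)
      have hnn : 0 ≤ ∫ x, llr ρ (lam.tilted h) x ∂ρ :=
        integral_llr_nonneg' ρ _ hrth (integrable_llr_tilted_right hrl hhρ hillr hint)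
      rw [integral_llr_tilted_right hrl hhρ hint hillr, ← hZ] at hnn
      rw [klDiv', if_pos ⟨hrl, hillr⟩, ← EReal.coe_sub, EReal.coe_le_coe_iff]
      linarith
    · rw [klDiv', if_neg hc, EReal.sub_top]
      exact bot_le
end

section
/- For any K ≥ 2 and n ≥ 2, set r = 4 log(nK)/n and let π_p be the Dirichlet distribution D_K(α_1,...,α_K) on the (K−1)-simplex with 2/K ≤ α_j ≤ 1 for all j. Then for any probability vector p⁰ in the simplex, π_p({p : KL(p⁰, p) ≤ K r}) ≥ e^{−nKr}. -/
open MeasureTheory Real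
open scoped BigOperators ENNReal

/-- Extend a vector `q` of the first `K−1` coordinates of a point of the simplex to a full
vector in `ℝ^K`, the last coordinate being `1 − ∑ q j`. -/
noncomputable def extSimplex (K : ℕ) (q : Fin (K - 1) → ℝ) (i : Fin K) : ℝ :=
  if h : (i : ℕ) < K - 1 then q ⟨i, h⟩ else 1 - ∑ j, q j

lemma extSimplex_castSucc (K' : ℕ) (q : Fin K' → ℝ) (j : Fin K') :
    extSimplex (K' + 1) q (Fin.castSucc j) = q j := by
  have h : ((Fin.castSucc j : Fin (K' + 1)) : ℕ) < K' + 1 - 1 := by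
    simpa using j.isLt
  simp only [extSimplex, dif_pos h]
  rfl

lemma extSimplex_last (K' : ℕ) (q : Fin K' → ℝ) :
    extSimplex (K' + 1) q (Fin.last K') = 1 - ∑ j, q j := by
  have h : ¬ ((Fin.last K' : Fin (K' + 1)) : ℕ) < K' + 1 - 1 := by simp
  simp only [extSimplex, dif_neg h]
  rfl

lemma extSimplex_sum (K' : ℕ) (q : Fin K' → ℝ) :
    ∑ i, extSimplex (K' + 1) q i = 1 := by
  rw [Fin.sum_univ_castSucc]
  simp only [extSimplex_castSucc, extSimplex_last]
  ring

lemma gamma_le_one_of_mem {y : ℝ} (h1 : 1 ≤ y) (h2 : y ≤ 2) : Real.Gamma y ≤ 1 := by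
  have h := Real.convexOn_Gamma.2 (Set.mem_Ioi.mpr one_pos) (Set.mem_Ioi.mpr two_pos)
    (show (0:ℝ) ≤ 2 - y by linarith) (show (0:ℝ) ≤ y - 1 by linarith)
    (show (2 - y) + (y - 1) = 1 by ring)
  simp only [smul_eq_mul] at h
  have hy : (2 - y) * 1 + (y - 1) * 2 = y := by ring
  rw [hy, Real.Gamma_one, Real.Gamma_two] at h
  linarith

lemma one_le_gamma_of_two_le {y : ℝ} (h : 2 ≤ y) : 1 ≤ Real.Gamma y := by
  have h2 : Real.Gamma 2 ≤ Real.Gamma y :=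
    Real.Gamma_strictMonoOn_Ici.monotoneOn (Set.self_mem_Ici) h h
  rwa [Real.Gamma_two] at h2

set_option maxHeartbeats 1000000 in
/-- Prior-mass lower bound for Dirichlet priors on KL-balls: for `r = 4 log(nK)/n` and a
Dirichlet prior `D_K(α₁,...,α_K)` with `2/K ≤ α_j ≤ 1`, the Dirichlet mass of the KL-ball
`{p : KL(p⁰,p) ≤ Kr}` around any probability vector `p⁰` is at least `e^{−nKr}`. The
Dirichlet distribution is expressed through its density
`Γ(∑α)/∏Γ(αⱼ) · ∏ pⱼ^{αⱼ−1}` in the coordinates `p₁,...,p_{K−1}`. -/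
theorem dirichlet_mass_kl_ball (K n : ℕ) (hK : 2 ≤ K) (hn : 2 ≤ n)
    (α : Fin K → ℝ) (hα : ∀ j, 2 / (K : ℝ) ≤ α j ∧ α j ≤ 1)
    (p0 : Fin K → ℝ) (hp0 : ∀ j, 0 ≤ p0 j) (hp0s : ∑ j, p0 j = 1) :
    ENNReal.ofReal (Real.exp (-(n * K * (4 * Real.log (n * K) / n))))
      ≤ ∫⁻ q in {q : Fin (K - 1) → ℝ |
            (∀ i : Fin K, 0 ≤ extSimplex K q i) ∧
            ∑ j, p0 j * Real.log (p0 j / extSimplex K q j)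
              ≤ K * (4 * Real.log (n * K) / n)},
          ENNReal.ofReal ((Real.Gamma (∑ j, α j) / ∏ j, Real.Gamma (α j)) *
            ∏ i, (extSimplex K q i) ^ (α i - 1)) := by
  obtain ⟨K', rfl⟩ : ∃ K', K = K' + 1 := ⟨K - 1, by omega⟩
  have hnR : (2 : ℝ) ≤ n := by exact_mod_cast hn
  have hn0 : (0 : ℝ) < n := by linarith
  set Kc : ℝ := ((K' + 1 : ℕ) : ℝ) with hKcdef
  have hKR : (2 : ℝ) ≤ Kc := by rw [hKcdef]; exact_mod_cast hK
  have hK0 : (0 : ℝ) < Kc := by linarith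
  set M : ℝ := (n : ℝ) * Kc with hMdef
  have hM4 : (4 : ℝ) ≤ M := by nlinarith
  have hM1 : (1 : ℝ) ≤ M := by linarith
  have hM0 : (0 : ℝ) < M := by linarith
  have hL : 1 ≤ Real.log M := by
    rw [Real.le_log_iff_exp_le hM0]
    have h9 := Real.exp_one_lt_d9
    linarith
  set r : ℝ := 4 * Real.log M / n with hrdef
  have hr0 : 0 < r := by
    apply div_pos (by linarith) hn0
  set x : ℝ := Kc * r with hxdef
  have hx0 : 0 < x := mul_pos hK0 hr0
  set ε : ℝ := min x 1 / 2 with hεdef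
  have hε0 : 0 < ε := by
    have : 0 < min x 1 := lt_min hx0 one_pos
    rw [hεdef]; linarith
  have hε2 : ε ≤ 1 / 2 := by
    have : min x 1 ≤ 1 := min_le_right _ _
    rw [hεdef]; linarith
  set δ : ℝ := ε / (2 * Kc) with hδdef
  have hδ0 : 0 < δ := div_pos hε0 (by linarith)
  have hδε : ε / Kc = 2 * δ := by
    rw [hδdef]; field_simp
  have hexp : Real.exp (-x) ≤ 1 - ε := by
    have he : Real.exp (-x) * Real.exp x = 1 := by rw [← Real.exp_add]; simp
    rcases le_total x 1 with hc | hc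
    · have hεx : ε = x / 2 := by rw [hεdef, min_eq_left hc]
      have h1 := Real.add_one_le_exp x
      have h2 := (Real.exp_pos (-x)).le
      nlinarith [mul_le_mul_of_nonneg_left h1 h2]
    · have hεx : ε = 1 / 2 := by rw [hεdef, min_eq_right hc]
      have h1 : Real.exp (-x) ≤ Real.exp (-1) := Real.exp_le_exp.mpr (by linarith)
      have h2 : Real.exp (-1) * Real.exp 1 = 1 := by rw [← Real.exp_add]; simp
      have h3 := Real.exp_one_gt_d9
      have h4 := (Real.exp_pos (-1)).le
      nlinarith
  -- the center of the box
  set pt : Fin (K' + 1) → ℝ := fun i => (1 - ε) * p0 i + ε / Kc with hptdef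
  have hpt_sum : ∑ i, pt i = 1 := by
    rw [hptdef]
    rw [Finset.sum_add_distrib, ← Finset.mul_sum, hp0s, Finset.sum_const,
      Finset.card_univ, Fintype.card_fin]
    rw [nsmul_eq_mul]
    rw [← hKcdef]
    field_simp
    ring
  have hpt_lb : ∀ i, 2 * δ ≤ pt i := by
    intro i
    have h1 : 0 ≤ (1 - ε) * p0 i := mul_nonneg (by linarith) (hp0 i)
    have := hδε
    rw [hptdef]
    simp only
    linarith
  set B : Set (Fin K' → ℝ) :=
    Set.univ.pi (fun j : Fin K' => Set.Icc (pt j.castSucc - δ) (pt j.castSucc)) with hBdef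
  have hBmeas : MeasurableSet B :=
    MeasurableSet.univ_pi (fun j => measurableSet_Icc)
  have hBvol : volume B = ENNReal.ofReal δ ^ K' := by
    rw [hBdef, volume_pi_pi]
    have : ∀ j : Fin K',
        volume (Set.Icc (pt j.castSucc - δ) (pt j.castSucc)) = ENNReal.ofReal δ := by
      intro j
      rw [Real.volume_Icc, sub_sub_cancel]
    simp only [this]
    rw [Finset.prod_const, Finset.card_univ, Fintype.card_fin]
  -- pointwise bounds on the box
  have hlow : ∀ q ∈ B, ∀ i, pt i - δ ≤ extSimplex (K' + 1) q i := by
    intro q hq i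
    have hq' : ∀ j : Fin K', q j ∈ Set.Icc (pt j.castSucc - δ) (pt j.castSucc) :=
      fun j => hq j (Set.mem_univ j)
    induction i using Fin.lastCases with
    | last =>
        rw [extSimplex_last]
        have hsq : ∑ j, q j ≤ ∑ j : Fin K', pt j.castSucc :=
          Finset.sum_le_sum (fun j _ => (hq' j).2)
        have hps : ∑ j : Fin K', pt j.castSucc + pt (Fin.last K') = 1 := by
          rw [← Fin.sum_univ_castSucc]; exact hpt_sum
        linarith
    | cast j =>
        rw [extSimplex_castSucc]
        exact (hq' j).1
  have hpos : ∀ q ∈ B, ∀ i, δ ≤ extSimplex (K' + 1) q i := by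
    intro q hq i
    have := hlow q hq i
    have := hpt_lb i
    linarith
  have hle1 : ∀ q ∈ B, ∀ i, extSimplex (K' + 1) q i ≤ 1 := by
    intro q hq i
    have hs := extSimplex_sum K' q
    calc extSimplex (K' + 1) q i
        ≤ ∑ j, extSimplex (K' + 1) q j :=
          Finset.single_le_sum (fun j _ => le_trans hδ0.le (hpos q hq j)) (Finset.mem_univ i)
      _ = 1 := hs
  -- the box is inside the KL ball
  have hsubset : B ⊆ {q : Fin K' → ℝ |
      (∀ i : Fin (K' + 1), 0 ≤ extSimplex (K' + 1) q i) ∧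
      ∑ j, p0 j * Real.log (p0 j / extSimplex (K' + 1) q j) ≤ x} := by
    intro q hq
    constructor
    · exact fun i => le_trans hδ0.le (hpos q hq i)
    · have hterm : ∀ i, p0 i * Real.log (p0 i / extSimplex (K' + 1) q i) ≤ p0 i * x := by
        intro i
        rcases (hp0 i).eq_or_lt with h0 | h0
        · rw [← h0]; simp
        · have hept : extSimplex (K' + 1) q i ≥ (1 - ε) * p0 i := by
            have h1 := hlow q hq i
            have h2 : pt i - δ = (1 - ε) * p0 i + δ := by
              rw [hptdef]; simp only; linarith [hδε]
            linarith
          have hext0 : 0 < extSimplex (K' + 1) q i := lt_of_lt_of_le hδ0 (hpos q hq i)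
          have hlog : Real.log (p0 i / extSimplex (K' + 1) q i) ≤ x := by
            rw [Real.log_le_iff_le_exp (div_pos h0 hext0)]
            rw [div_le_iff₀ hext0]
            have hee : Real.exp x * Real.exp (-x) = 1 := by rw [← Real.exp_add]; simp
            have h3 : Real.exp (-x) * p0 i ≤ extSimplex (K' + 1) q i := by
              calc Real.exp (-x) * p0 i ≤ (1 - ε) * p0 i :=
                    mul_le_mul_of_nonneg_right hexp h0.le
                _ ≤ extSimplex (K' + 1) q i := hept
            nlinarith [mul_le_mul_of_nonneg_left h3 (Real.exp_pos x).le]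
          exact mul_le_mul_of_nonneg_left hlog h0.le
      calc ∑ j, p0 j * Real.log (p0 j / extSimplex (K' + 1) q j)
          ≤ ∑ j, p0 j * x := Finset.sum_le_sum (fun j _ => hterm j)
        _ = x := by rw [← Finset.sum_mul, hp0s, one_mul]
  -- lower bound on the density constant
  have hαpos : ∀ j, 0 < α j := fun j =>
    lt_of_lt_of_le (div_pos two_pos hK0) (hα j).1
  have hGs : 1 ≤ Real.Gamma (∑ j, α j) := by
    apply one_le_gamma_of_two_le
    have h1 : ∑ j : Fin (K' + 1), 2 / Kc ≤ ∑ j, α j :=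
      Finset.sum_le_sum (fun j _ => (hα j).1)
    rw [Finset.sum_const, Finset.card_univ, Fintype.card_fin, nsmul_eq_mul] at h1
    rw [← hKcdef] at h1
    calc (2 : ℝ) = Kc * (2 / Kc) := by field_simp
      _ ≤ ∑ j, α j := h1
  have hGj : ∀ j, Real.Gamma (α j) ≤ Kc / 2 := by
    intro j
    have h1 : Real.Gamma (α j + 1) ≤ 1 :=
      gamma_le_one_of_mem (by linarith [(hαpos j)]) (by linarith [(hα j).2])
    have h2 : Real.Gamma (α j + 1) = α j * Real.Gamma (α j) :=
      Real.Gamma_add_one (hαpos j).ne'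
    have h3 : 0 < Real.Gamma (α j) := Real.Gamma_pos_of_pos (hαpos j)
    have h4 : 2 / Kc ≤ α j := (hα j).1
    have h5 : 2 / Kc * Real.Gamma (α j) ≤ 1 := by
      have h6 := mul_le_mul_of_nonneg_right h4 h3.le
      rw [← h2] at h6
      linarith
    have h8 : 2 * Real.Gamma (α j) ≤ Kc := by
      calc 2 * Real.Gamma (α j) = (2 / Kc * Real.Gamma (α j)) * Kc := by
            field_simp
        _ ≤ 1 * Kc := mul_le_mul_of_nonneg_right h5 hK0.le
        _ = Kc := one_mul _
    linarith
  have hGprodpos : 0 < ∏ j, Real.Gamma (α j) :=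
    Finset.prod_pos (fun j _ => Real.Gamma_pos_of_pos (hαpos j))
  have hGprod : ∏ j, Real.Gamma (α j) ≤ (Kc / 2) ^ (K' + 1) := by
    calc ∏ j, Real.Gamma (α j)
        ≤ ∏ _j : Fin (K' + 1), (Kc / 2) :=
          Finset.prod_le_prod (fun j _ => (Real.Gamma_pos_of_pos (hαpos j)).le)
            (fun j _ => hGj j)
      _ = (Kc / 2) ^ (K' + 1) := by
          rw [Finset.prod_const, Finset.card_univ, Fintype.card_fin]
  have hCpos : 0 < (2 / Kc) ^ (K' + 1) := pow_pos (by positivity) _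
  have hC : (2 / Kc) ^ (K' + 1) ≤
      Real.Gamma (∑ j, α j) / ∏ j, Real.Gamma (α j) := by
    have heq : (2 / Kc) ^ (K' + 1) = 1 / (Kc / 2) ^ (K' + 1) := by
      rw [one_div, ← inv_pow, inv_div]
    rw [heq]
    calc 1 / (Kc / 2) ^ (K' + 1) ≤ 1 / ∏ j, Real.Gamma (α j) := by
          apply one_div_le_one_div_of_le hGprodpos hGprod
      _ ≤ Real.Gamma (∑ j, α j) / ∏ j, Real.Gamma (α j) := by
          exact (div_le_div_iff_of_pos_right hGprodpos).mpr hGs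
  -- density lower bound on the box
  have hdens : ∀ q ∈ B, (2 / Kc) ^ (K' + 1) ≤
      (Real.Gamma (∑ j, α j) / ∏ j, Real.Gamma (α j)) *
        ∏ i, (extSimplex (K' + 1) q i) ^ (α i - 1) := by
    intro q hq
    have h1 : (1 : ℝ) ≤ ∏ i, (extSimplex (K' + 1) q i) ^ (α i - 1) := by
      have := Finset.prod_le_prod (s := Finset.univ)
        (f := fun _ : Fin (K' + 1) => (1 : ℝ))
        (g := fun i => (extSimplex (K' + 1) q i) ^ (α i - 1))
        (fun i _ => zero_le_one)
        (fun i _ => Real.one_le_rpow_of_pos_of_le_one_of_nonpos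
          (lt_of_lt_of_le hδ0 (hpos q hq i)) (hle1 q hq i) (by linarith [(hα i).2]))
      simpa using this
    calc (2 / Kc) ^ (K' + 1) = (2 / Kc) ^ (K' + 1) * 1 := by ring
      _ ≤ (Real.Gamma (∑ j, α j) / ∏ j, Real.Gamma (α j)) *
            ∏ i, (extSimplex (K' + 1) q i) ^ (α i - 1) :=
          mul_le_mul hC h1 zero_le_one (le_trans hCpos.le hC)
  -- the numeric inequality
  have hnum : Real.exp (-(M * r)) ≤ (2 / Kc) ^ (K' + 1) * δ ^ K' := by
    have harg : -(M * r) = (4 * (K' + 1) : ℕ) * (-Real.log M) := by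
      rw [hrdef, hMdef, hKcdef]
      push_cast
      field_simp
    rw [harg, Real.exp_nat_mul, Real.exp_neg, Real.exp_log hM0]
    have hMinv0 : (0 : ℝ) ≤ M⁻¹ := by positivity
    have hMinv1 : M⁻¹ ≤ 1 := by
      exact inv_le_one_of_one_le₀ hM1
    have h1 : M⁻¹ ≤ 2 / Kc := by
      rw [inv_eq_one_div, div_le_div_iff₀ hM0 hK0]
      nlinarith
    have h2 : M⁻¹ ^ 2 ≤ δ := by
      rcases le_total x 1 with hc | hc
      · have hδeq : δ = Real.log M / n := by
          rw [hδdef, hεdef, min_eq_left hc, hxdef, hrdef]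
          field_simp
          ring
        have ha : M⁻¹ ^ 2 ≤ M⁻¹ := by nlinarith
        have hb : M⁻¹ ≤ 1 / (n : ℝ) := by
          rw [inv_eq_one_div, div_le_div_iff₀ hM0 hn0, hMdef]
          nlinarith
        have hcc : 1 / (n : ℝ) ≤ Real.log M / n := by
          exact (div_le_div_iff_of_pos_right hn0).mpr hL
        rw [hδeq]; linarith
      · have hδeq : δ = 1 / (4 * Kc) := by
          rw [hδdef, hεdef, min_eq_right hc]
          field_simp
          ring
        rw [hδeq, inv_pow, inv_eq_one_div, div_le_div_iff₀ (by positivity) (by positivity)]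
        rw [hMdef]
        nlinarith
    calc (M⁻¹) ^ (4 * (K' + 1))
        ≤ (M⁻¹) ^ ((K' + 1) + 2 * K') :=
          pow_le_pow_of_le_one hMinv0 hMinv1 (by omega)
      _ = (M⁻¹) ^ (K' + 1) * ((M⁻¹) ^ 2) ^ K' := by
          rw [pow_add, pow_mul]
      _ ≤ (2 / Kc) ^ (K' + 1) * δ ^ K' := by
          apply mul_le_mul
          · exact pow_le_pow_left₀ hMinv0 h1 _
          · exact pow_le_pow_left₀ (by positivity) h2 _
          · positivity
          · positivity
  -- put it together
  calc ENNReal.ofReal (Real.exp (-(M * r)))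
      ≤ ENNReal.ofReal ((2 / Kc) ^ (K' + 1) * δ ^ K') :=
        ENNReal.ofReal_le_ofReal hnum
    _ = ENNReal.ofReal ((2 / Kc) ^ (K' + 1)) * volume B := by
        rw [ENNReal.ofReal_mul hCpos.le, hBvol, ENNReal.ofReal_pow hδ0.le]
    _ = ∫⁻ _q in B, ENNReal.ofReal ((2 / Kc) ^ (K' + 1)) :=
        (setLIntegral_const B _).symm
    _ ≤ ∫⁻ q in B, ENNReal.ofReal ((Real.Gamma (∑ j, α j) / ∏ j, Real.Gamma (α j)) *
            ∏ i, (extSimplex (K' + 1) q i) ^ (α i - 1)) :=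
        setLIntegral_mono' hBmeas (fun q hq => ENNReal.ofReal_le_ofReal (hdens q hq))
    _ ≤ _ := lintegral_mono_set hsubset
end

section
/- For every real t > 0, log(t) − 1/(2t) − 1/(12t²) < ψ(t) < log(t) − 1/(2t) − 1/(12t²) + 1/(120t⁴), where ψ is the digamma function. -/
open Real Filter Topology Set

namespace DigammaAux

/-- The approximation `g(x) = log x - 1/(2x) - 1/(12x²)`. -/
noncomputable def dg (x : ℝ) : ℝ := Real.log x - 1 / (2 * x) - 1 / (12 * x ^ 2)

/-- Error bound term `u(x) = 1/(120 x⁴)`. -/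
noncomputable def du (x : ℝ) : ℝ := 1 / (120 * x ^ 4)

/-- The summand `h(x) = g(x+1) - g(x) - 1/x`, written explicitly. -/
noncomputable def dh (x : ℝ) : ℝ :=
  Real.log (x + 1) - Real.log x - 1 / (2 * x) - 1 / (2 * (x + 1))
    + 1 / (12 * x ^ 2) - 1 / (12 * (x + 1) ^ 2)

lemma dh_eq {x : ℝ} (hx : 0 < x) : dh x = dg (x + 1) - dg x - 1 / x := by
  have h1 : x ≠ 0 := hx.ne'
  have h2 : x + 1 ≠ 0 := by positivity
  unfold dh dg
  field_simp
  ring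

lemma hasDerivAt_dh {x : ℝ} (hx : 0 < x) :
    HasDerivAt dh (-(1 / (6 * x ^ 3 * (x + 1) ^ 3))) x := by
  have h1 : x ≠ 0 := hx.ne'
  have h2 : x + 1 ≠ 0 := by positivity
  have t1 : HasDerivAt (fun y : ℝ => Real.log (y + 1)) (1 / (x + 1)) x := by
    simpa using ((hasDerivAt_id' x).add_const 1).log h2
  have t2 : HasDerivAt Real.log x⁻¹ x := Real.hasDerivAt_log h1
  have t3 := (hasDerivAt_const x (1:ℝ)).div ((hasDerivAt_id' x).const_mul 2)
    (by positivity : 2 * x ≠ 0)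
  have t4 := (hasDerivAt_const x (1:ℝ)).div
    (((hasDerivAt_id' x).add_const 1).const_mul 2) (by positivity : 2 * (x + 1) ≠ 0)
  have t5 := (hasDerivAt_const x (1:ℝ)).div ((hasDerivAt_pow 2 x).const_mul 12)
    (by positivity : 12 * x ^ 2 ≠ 0)
  have t6 := (hasDerivAt_const x (1:ℝ)).div
    ((((hasDerivAt_id' x).add_const 1).pow 2).const_mul 12)
    (by positivity : 12 * (x + 1) ^ 2 ≠ 0)
  have big := ((((t1.sub t2).sub t3).sub t4).add t5).sub t6
  refine big.congr_deriv ?_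
  push_cast [Pi.pow_apply]
  field_simp
  ring

/-- The function `K(x) = u(x) - u(x+1) - h(x)`. -/
noncomputable def dK (x : ℝ) : ℝ := du x - du (x + 1) - dh x

lemma hasDerivAt_dK {x : ℝ} (hx : 0 < x) :
    HasDerivAt dK (-((5 * x ^ 2 + 5 * x + 1) / (30 * x ^ 5 * (x + 1) ^ 5))) x := by
  have h1 : x ≠ 0 := hx.ne'
  have h2 : x + 1 ≠ 0 := by positivity
  have a1 := (hasDerivAt_const x (1:ℝ)).div ((hasDerivAt_pow 4 x).const_mul 120)
    (by positivity : 120 * x ^ 4 ≠ 0)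
  have a2 := (hasDerivAt_const x (1:ℝ)).div
    ((((hasDerivAt_id' x).add_const 1).pow 4).const_mul 120)
    (by positivity : 120 * (x + 1) ^ 4 ≠ 0)
  have big := (a1.sub a2).sub (hasDerivAt_dh hx)
  have : HasDerivAt (fun y : ℝ => 1 / (120 * y ^ 4) - 1 / (120 * (y + 1) ^ 4) - dh y)
      (-((5 * x ^ 2 + 5 * x + 1) / (30 * x ^ 5 * (x + 1) ^ 5))) x := by
    refine big.congr_deriv ?_
    push_cast [Pi.pow_apply]
    field_simp
    ring
  exact this


lemma tendsto_one_div_aux {f : ℝ → ℝ} (hf : Tendsto f atTop atTop) :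
    Tendsto (fun x => 1 / f x) atTop (𝓝 0) := by
  simpa [one_div, Function.comp_def] using tendsto_inv_atTop_zero.comp hf

lemma tendsto_log_sub_log : Tendsto (fun x : ℝ => Real.log (x + 1) - Real.log x) atTop (𝓝 0) := by
  have h1 : Tendsto (fun x : ℝ => 1 + x⁻¹) atTop (𝓝 1) := by
    simpa using (tendsto_const_nhds (x := (1:ℝ))).add tendsto_inv_atTop_zero
  have h2 := (Real.continuousAt_log one_ne_zero).tendsto.comp h1
  rw [Real.log_one] at h2
  apply h2.congr'
  filter_upwards [eventually_gt_atTop (0:ℝ)] with x hx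
  have hx' : x ≠ 0 := hx.ne'
  rw [Function.comp_apply, ← Real.log_div (by positivity) hx']
  congr 1
  field_simp

lemma tendsto_dh : Tendsto dh atTop (𝓝 0) := by
  have a1 : Tendsto (fun x : ℝ => 1 / (2 * x)) atTop (𝓝 0) :=
    tendsto_one_div_aux (Tendsto.const_mul_atTop (by norm_num : (0:ℝ) < 2) tendsto_id)
  have a2 : Tendsto (fun x : ℝ => 1 / (2 * (x + 1))) atTop (𝓝 0) :=
    tendsto_one_div_aux (Tendsto.const_mul_atTop (by norm_num : (0:ℝ) < 2)
      (tendsto_atTop_add_const_right atTop 1 tendsto_id))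
  have a3 : Tendsto (fun x : ℝ => 1 / (12 * x ^ 2)) atTop (𝓝 0) :=
    tendsto_one_div_aux (Tendsto.const_mul_atTop (by norm_num : (0:ℝ) < 12) (tendsto_pow_atTop two_ne_zero))
  have a4 : Tendsto (fun x : ℝ => 1 / (12 * (x + 1) ^ 2)) atTop (𝓝 0) :=
    tendsto_one_div_aux (Tendsto.const_mul_atTop (by norm_num : (0:ℝ) < 12) ((tendsto_pow_atTop two_ne_zero).comp
      (tendsto_atTop_add_const_right atTop 1 tendsto_id)))
  have big := ((((tendsto_log_sub_log.sub a1).sub a2).add a3).sub a4)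
  rw [show ((((0:ℝ) - 0) - 0) + 0) - 0 = 0 from by norm_num] at big
  exact big.congr fun x => by simp only [dh]

lemma tendsto_du : Tendsto du atTop (𝓝 0) :=
  tendsto_one_div_aux (Tendsto.const_mul_atTop (by norm_num : (0:ℝ) < 120) (tendsto_pow_atTop four_ne_zero))

lemma tendsto_dK : Tendsto dK atTop (𝓝 0) := by
  have := (tendsto_du.sub
    (tendsto_du.comp (tendsto_atTop_add_const_right atTop 1 tendsto_id))).sub tendsto_dh
  simpa [show dK = fun x => du x - du (x + 1) - dh x from rfl] using this

lemma pos_of_anti {f : ℝ → ℝ} (ha : StrictAntiOn f (Ioi 0)) (hl : Tendsto f atTop (𝓝 0))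
    {x : ℝ} (hx : 0 < x) : 0 < f x := by
  have h1 : 0 ≤ f (x + 1) := by
    refine le_of_tendsto hl ?_
    filter_upwards [eventually_ge_atTop (x + 1)] with y hy
    rcases eq_or_lt_of_le hy with h | h
    · exact le_of_eq (congrArg f h.symm)
    · exact (ha (mem_Ioi.mpr (by linarith)) (mem_Ioi.mpr (by linarith)) h).le
  exact h1.trans_lt (ha (mem_Ioi.mpr hx) (mem_Ioi.mpr (by linarith)) (lt_add_one x))

lemma dh_anti : StrictAntiOn dh (Ioi 0) := by
  refine strictAntiOn_of_deriv_neg (convex_Ioi 0)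
    (fun x hx => (hasDerivAt_dh hx).continuousAt.continuousWithinAt) (fun x hx => ?_)
  rw [interior_Ioi] at hx
  have hx' : (0:ℝ) < x := hx
  rw [(hasDerivAt_dh hx').deriv]
  have : 0 < 1 / (6 * x ^ 3 * (x + 1) ^ 3) := by positivity
  linarith

lemma dK_anti : StrictAntiOn dK (Ioi 0) := by
  refine strictAntiOn_of_deriv_neg (convex_Ioi 0)
    (fun x hx => (hasDerivAt_dK hx).continuousAt.continuousWithinAt) (fun x hx => ?_)
  rw [interior_Ioi] at hx
  have hx' : (0:ℝ) < x := hx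
  rw [(hasDerivAt_dK hx').deriv]
  have : 0 < (5 * x ^ 2 + 5 * x + 1) / (30 * x ^ 5 * (x + 1) ^ 5) := by positivity
  linarith

lemma dh_pos {x : ℝ} (hx : 0 < x) : 0 < dh x := pos_of_anti dh_anti tendsto_dh hx

lemma dK_pos {x : ℝ} (hx : 0 < x) : 0 < dK x := pos_of_anti dK_anti tendsto_dK hx



noncomputable def psi (x : ℝ) : ℝ := deriv (fun t => Real.log (Real.Gamma t)) x

lemma hder {x : ℝ} (hx : 0 < x) :
    DifferentiableAt ℝ (fun t => Real.log (Real.Gamma t)) x := by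
  have h : ∀ m : ℕ, x ≠ -m := by
    intro m hm
    have : (0:ℝ) ≤ m := m.cast_nonneg
    rw [hm] at hx; linarith
  exact (Real.differentiableAt_Gamma h).log (Real.Gamma_ne_zero h)

lemma h_rec {x : ℝ} (hx : 0 < x) :
    Real.log (Real.Gamma (x + 1)) = Real.log (Real.Gamma x) + Real.log x := by
  rw [Real.Gamma_add_one hx.ne', Real.log_mul hx.ne' (Real.Gamma_pos_of_pos hx).ne', add_comm]

lemma psi_rec {x : ℝ} (hx : 0 < x) : psi (x + 1) = psi x + 1 / x := by
  unfold psi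
  rw [← deriv_comp_add_const, one_div, ← Real.deriv_log,
    ← deriv_add (hder hx) (Real.differentiableAt_log hx.ne')]
  apply Filter.EventuallyEq.deriv_eq
  filter_upwards [eventually_gt_nhds hx] with y hy
  exact h_rec hy

lemma hconv : ConvexOn ℝ (Ioi 0) (fun t => Real.log (Real.Gamma t)) := by
  have := Real.convexOn_log_Gamma
  rwa [Function.comp_def] at this

lemma psi_le_log {x : ℝ} (hx : 0 < x) : psi x ≤ Real.log x := by
  have h := hconv.deriv_le_slope (mem_Ioi.mpr hx) (mem_Ioi.mpr (by linarith : (0:ℝ) < x + 1))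
    (lt_add_one x) (hder hx)
  rw [slope_def_field, h_rec hx] at h
  simpa [psi] using h

lemma log_le_psi {x : ℝ} (hx : 0 < x) : Real.log x ≤ psi (x + 1) := by
  have h := hconv.slope_le_deriv (mem_Ioi.mpr hx) (mem_Ioi.mpr (by linarith : (0:ℝ) < x + 1))
    (lt_add_one x) (hder (by linarith))
  rw [slope_def_field, h_rec hx] at h
  simpa [psi] using h

lemma sum_dh (t : ℝ) (ht : 0 < t) (N : ℕ) :
    ∑ n ∈ Finset.range N, dh (t + n) = (psi t - dg t) + (dg (t + N) - psi (t + N)) := by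
  induction N with
  | zero => simp
  | succ N ih =>
    have hN : (0:ℝ) < t + N := by positivity
    rw [Finset.sum_range_succ, ih, dh_eq hN,
      show (t + (↑(N + 1) : ℝ)) = (t + N) + 1 by push_cast; ring, psi_rec hN]
    ring

lemma tendsto_err (t : ℝ) (ht : 0 < t) :
    Tendsto (fun N : ℕ => dg (t + N) - psi (t + N)) atTop (𝓝 0) := by
  have hseq : Tendsto (fun N : ℕ => t + (N : ℝ)) atTop atTop :=
    tendsto_atTop_add_const_left atTop t tendsto_natCast_atTop_atTop
  have base : Tendsto (fun y : ℝ => dg y - Real.log y) atTop (𝓝 0) := by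
    have a1 : Tendsto (fun x : ℝ => 1 / (2 * x)) atTop (𝓝 0) :=
      tendsto_one_div_aux (Tendsto.const_mul_atTop (by norm_num : (0:ℝ) < 2) tendsto_id)
    have a2 : Tendsto (fun x : ℝ => 1 / (12 * x ^ 2)) atTop (𝓝 0) :=
      tendsto_one_div_aux (Tendsto.const_mul_atTop (by norm_num : (0:ℝ) < 12)
        (tendsto_pow_atTop two_ne_zero))
    have big := (a1.neg).sub a2
    rw [show -(0:ℝ) - 0 = 0 from by norm_num] at big
    exact big.congr fun x => by simp only [dg]; ring
  have hL : Tendsto (fun N : ℕ => dg (t + N) - Real.log (t + N)) atTop (𝓝 0) :=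
    base.comp hseq
  have hU : Tendsto (fun N : ℕ => dg (t + N) - Real.log (t + N - 1)) atTop (𝓝 0) := by
    have hlg : Tendsto (fun y : ℝ => Real.log y - Real.log (y - 1)) atTop (𝓝 0) := by
      have := tendsto_log_sub_log.comp (tendsto_atTop_add_const_right atTop (-1) tendsto_id)
      refine this.congr fun y => ?_
      simp only [Function.comp_apply, id_eq]
      ring_nf
    have big := hL.add (hlg.comp hseq)
    rw [add_zero] at big
    refine big.congr fun N => ?_
    simp only [Function.comp_apply]
    ring
  refine tendsto_of_tendsto_of_tendsto_of_le_of_le' hL hU ?_ ?_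
  · filter_upwards with N
    have hN : (0:ℝ) < t + N := by positivity
    have := psi_le_log hN
    linarith
  · filter_upwards [eventually_ge_atTop 1] with N hN
    have hN' : (0:ℝ) < t + N - 1 := by
      have : (1:ℝ) ≤ N := by exact_mod_cast hN
      linarith
    have h := log_le_psi hN'
    rw [show t + (N:ℝ) - 1 + 1 = t + N by ring] at h
    linarith

lemma key (t : ℝ) (ht : 0 < t) : 0 ≤ psi t - dg t ∧ psi t - dg t ≤ du t := by
  have hS : Tendsto (fun N : ℕ => ∑ n ∈ Finset.range N, dh (t + n)) atTop
      (𝓝 (psi t - dg t)) := by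
    have := (tendsto_const_nhds (x := psi t - dg t) (f := atTop (α := ℕ))).add (tendsto_err t ht)
    rw [add_zero] at this
    exact this.congr fun N => (sum_dh t ht N).symm
  constructor
  · refine ge_of_tendsto' hS fun N => ?_
    exact Finset.sum_nonneg fun n _ => (dh_pos (by positivity : (0:ℝ) < t + n)).le
  · refine le_of_tendsto' hS fun N => ?_
    have h1 : ∑ n ∈ Finset.range N, dh (t + n) ≤
        ∑ n ∈ Finset.range N, ((fun k : ℕ => du (t + k)) n - (fun k : ℕ => du (t + k)) (n + 1)) := by
      refine Finset.sum_le_sum fun n _ => ?_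
      have hn : (0:ℝ) < t + n := by positivity
      have := dK_pos hn
      simp only [dK] at this
      have harg : (t + (↑(n + 1) : ℝ)) = (t + n) + 1 := by push_cast; ring
      simp only [harg]
      linarith
    rw [Finset.sum_range_sub'] at h1
    have h2 : 0 ≤ du (t + N) := by
      simp only [du]; positivity
    simp only [Nat.cast_zero, add_zero] at h1
    linarith

end DigammaAux

/-- The digamma function `ψ = (log Γ)'`. -/
noncomputable def digamma (x : ℝ) : ℝ := deriv (fun t => Real.log (Real.Gamma t)) x

/-- Two-sided bounds on the digamma function: for every `t > 0`,
`log t − 1/(2t) − 1/(12t²) < ψ(t) < log t − 1/(2t) − 1/(12t²) + 1/(120t⁴)`. -/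
theorem digamma_bounds (t : ℝ) (ht : 0 < t) :
    Real.log t - 1 / (2 * t) - 1 / (12 * t ^ 2) < digamma t ∧
      digamma t < Real.log t - 1 / (2 * t) - 1 / (12 * t ^ 2) + 1 / (120 * t ^ 4) := by
  open DigammaAux in
  have hpsi : digamma = DigammaAux.psi := rfl
  obtain ⟨h1, h2⟩ := DigammaAux.key t ht
  obtain ⟨h1', h2'⟩ := DigammaAux.key (t + 1) (by linarith)
  have hrec : DigammaAux.psi (t + 1) = DigammaAux.psi t + 1 / t := DigammaAux.psi_rec ht
  have hdh : DigammaAux.dh t = DigammaAux.dg (t + 1) - DigammaAux.dg t - 1 / t :=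
    DigammaAux.dh_eq ht
  have hdK := DigammaAux.dK_pos ht
  have hdhp := DigammaAux.dh_pos ht
  simp only [DigammaAux.dK] at hdK
  simp only [hpsi]
  simp only [DigammaAux.dg, DigammaAux.du] at *
  constructor <;> linarith
end

section
/- Let p⁰ ∈ S_K be a probability vector with p⁰_K = max_j p⁰_j, let n ≥ 2, K ≥ 2, and let r > 0 satisfy Kr ≥ 1/(n−1). If p ∈ ℝ^K satisfies p⁰_j e^{−Kr} ≤ p_j ≤ p⁰_j e^{−Kr} + p⁰_K/(n(K−1)) for j = 1,...,K−1 and p_K = 1 − ∑_{j=1}^{K−1} p_j, then p is a probability vector (all coordinates nonnegative) and KL(p⁰, p) ≤ Kr. -/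
open scoped BigOperators

/-- If `p⁰ ∈ S_K` has its largest coordinate in the last position, `Kr ≥ 1/(n−1)` and `p`
satisfies `p⁰_j e^{−Kr} ≤ p_j ≤ p⁰_j e^{−Kr} + p⁰_K/(n(K−1))` for `j < K` with
`p_K = 1 − ∑_{j<K} p_j`, then `p` is a probability vector and `KL(p⁰,p) ≤ Kr`. -/
theorem kl_ball_construction (K n : ℕ) (hK : 2 ≤ K) (hn : 2 ≤ n)
    (r : ℝ) (hr : 0 < r) (hKr : 1 / ((n : ℝ) - 1) ≤ K * r)
    (p0 : Fin K → ℝ) (hp0 : ∀ j, 0 ≤ p0 j) (hp0s : ∑ j, p0 j = 1)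
    (last : Fin K) (hlast : (last : ℕ) = K - 1)
    (hmax : ∀ j, p0 j ≤ p0 last)
    (p : Fin K → ℝ)
    (hlb : ∀ j, j ≠ last → p0 j * Real.exp (-(K * r)) ≤ p j)
    (hub : ∀ j, j ≠ last →
      p j ≤ p0 j * Real.exp (-(K * r)) + p0 last / (n * ((K : ℝ) - 1)))
    (hplast : p last = 1 - ∑ j ∈ Finset.univ.erase last, p j) :
    (∀ j, 0 ≤ p j) ∧ ∑ j, p j = 1 ∧
      ∑ j, p0 j * Real.log (p0 j / p j) ≤ K * r := by
  have hK1 : (1:ℝ) ≤ (K:ℝ) - 1 := by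
    have : (2:ℝ) ≤ (K:ℝ) := by exact_mod_cast hK
    linarith
  have hn1 : (1:ℝ) ≤ (n:ℝ) - 1 := by
    have : (2:ℝ) ≤ (n:ℝ) := by exact_mod_cast hn
    linarith
  have hn0 : (0:ℝ) < n := by linarith
  have hnn : (0:ℝ) < (n:ℝ) - 1 := by linarith
  set E := Real.exp (-(K*r)) with hEdef
  have hEpos : 0 < E := Real.exp_pos _
  -- key exponential estimate : E ≤ (n-1)/n
  have hEle : E ≤ ((n:ℝ)-1)/n := by
    have h1 : E ≤ Real.exp (-(1/((n:ℝ)-1))) := Real.exp_le_exp.mpr (by linarith)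
    have h2 : (1:ℝ) + 1/((n:ℝ)-1) ≤ Real.exp (1/((n:ℝ)-1)) := by
      linarith [Real.add_one_le_exp (1/((n:ℝ)-1))]
    have h4 : (1:ℝ) + 1/((n:ℝ)-1) = (n:ℝ)/((n:ℝ)-1) := by field_simp; ring
    have hq : (0:ℝ) < (n:ℝ)/((n:ℝ)-1) := by positivity
    have h5 : Real.exp (-(1/((n:ℝ)-1))) ≤ ((n:ℝ)-1)/n := by
      rw [Real.exp_neg]
      have := inv_anti₀ hq (by linarith : (n:ℝ)/((n:ℝ)-1) ≤ Real.exp (1/((n:ℝ)-1)))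
      calc (Real.exp (1/((n:ℝ)-1)))⁻¹ ≤ ((n:ℝ)/((n:ℝ)-1))⁻¹ := this
        _ = ((n:ℝ)-1)/n := by field_simp
    linarith
  have hp0l1 : p0 last ≤ 1 := by
    rw [← hp0s]
    exact Finset.single_le_sum (fun j _ => hp0 j) (Finset.mem_univ last)
  -- sum of p0 over erase
  have hS0 : ∑ j ∈ Finset.univ.erase last, p0 j = 1 - p0 last := by
    have := Finset.add_sum_erase Finset.univ p0 (Finset.mem_univ last)
    linarith [hp0s, this]
  -- card of erase
  have hcard : ((Finset.univ.erase last).card : ℝ) = (K:ℝ) - 1 := by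
    rw [Finset.card_erase_of_mem (Finset.mem_univ last)]
    simp only [Finset.card_univ, Fintype.card_fin]
    have h1K : 1 ≤ K := by omega
    push_cast [Nat.cast_sub h1K]
    ring
  -- upper bound on the sum over erase
  have hSub : ∑ j ∈ Finset.univ.erase last, p j ≤ (1 - p0 last) * E + p0 last / n := by
    have h1 : ∑ j ∈ Finset.univ.erase last, p j ≤
        ∑ j ∈ Finset.univ.erase last, (p0 j * E + p0 last / (n * ((K:ℝ)-1))) := by
      apply Finset.sum_le_sum
      intro j hj
      exact hub j (Finset.ne_of_mem_erase hj)
    rw [Finset.sum_add_distrib, ← Finset.sum_mul, hS0, Finset.sum_const, nsmul_eq_mul] at h1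
    have h2 : ((Finset.univ.erase last).card : ℝ) * (p0 last / (n * ((K:ℝ)-1)))
        = p0 last / n := by
      rw [hcard]
      field_simp
    linarith
  -- lower bound on p last
  have hLBlast : p0 last * E ≤ p last := by
    rw [hplast]
    have h1 : p0 last / (n:ℝ) ≤ 1 / n := by
      gcongr
    have h2 : ((n:ℝ)-1)/n + 1/n = 1 := by field_simp; ring
    nlinarith [hSub, hEle, hp0 last]
  have hLB : ∀ j, p0 j * E ≤ p j := by
    intro j
    by_cases h : j = last
    · subst h; exact hLBlast
    · exact hlb j h
  have hnonneg : ∀ j, 0 ≤ p j := fun j =>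
    le_trans (mul_nonneg (hp0 j) hEpos.le) (hLB j)
  refine ⟨hnonneg, ?_, ?_⟩
  · have := Finset.add_sum_erase Finset.univ p (Finset.mem_univ last)
    rw [hplast] at this
    linarith
  · have hterm : ∀ j ∈ Finset.univ, p0 j * Real.log (p0 j / p j) ≤ p0 j * ((K:ℝ) * r) := by
      intro j _
      rcases (hp0 j).eq_or_lt with h0 | h0
      · simp [← h0]
      · have hpj : 0 < p j := lt_of_lt_of_le (by positivity) (hLB j)
        have hratio : p0 j / p j ≤ Real.exp ((K:ℝ) * r) := by
          have h1 : p0 j / p j ≤ p0 j / (p0 j * E) :=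
            div_le_div_of_nonneg_left (hp0 j) (by positivity) (hLB j)
          have h2 : p0 j / (p0 j * E) = Real.exp ((K:ℝ) * r) := by
            rw [hEdef, Real.exp_neg]
            field_simp
          linarith
        have hlog : Real.log (p0 j / p j) ≤ (K:ℝ) * r := by
          have := Real.log_le_log (by positivity : (0:ℝ) < p0 j / p j) hratio
          rwa [Real.log_exp] at this
        exact mul_le_mul_of_nonneg_left hlog h0.le
    calc ∑ j, p0 j * Real.log (p0 j / p j) ≤ ∑ j, p0 j * ((K:ℝ) * r) :=
          Finset.sum_le_sum hterm
      _ = (∑ j, p0 j) * ((K:ℝ) * r) := by rw [Finset.sum_mul]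
      _ = (K:ℝ) * r := by rw [hp0s, one_mul]
end
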